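/- If N is a PPTq operation from matrices on ℂ^{d_A}⊗ℂ^{d_B} to matrices on ℂ^{d_{A'}}⊗ℂ^{d_{B'}} and ρ is a bipartite quasi-state with N(ρ) = σ, then ‖ρ^{T_B}‖₁ ≥ ‖σ^{T_{B'}}‖₁, i.e., the logarithmic negativity satisfies E_N(ρ) ≥ E_N(σ). -/

import Mathlib

open scoped BigOperators ComplexOrder

noncomputable section

/-- Bipartite matrices on `ℂ^{IA} ⊗ ℂ^{IB}`, indexed by pairs. -/
abbrev BMat (IA IB : Type) : Type := Matrix (IA × IB) (IA × IB) ℂ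

/-- Partial transpose on the `B` system: `(X^{T_B})_{(i,j),(k,l)} = X_{(i,l),(k,j)}`. -/
def ptB {IA IB : Type} (X : BMat IA IB) : BMat IA IB :=
  fun p q => X (p.1, q.2) (q.1, p.2)

/-- Trace norm `‖X‖₁ = tr √(X† X)`. -/
noncomputable def traceNorm {n : Type} [Fintype n] [DecidableEq n]
    (X : Matrix n n ℂ) : ℝ :=
  ((((Matrix.posSemidef_conjTranspose_mul_self X).1.eigenvectorUnitary : Matrix n n ℂ) *
      Matrix.diagonal (((↑) : ℝ → ℂ) ∘ (√·) ∘ (Matrix.posSemidef_conjTranspose_mul_self X).1.eigenvalues) *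
      (star (Matrix.posSemidef_conjTranspose_mul_self X).1.eigenvectorUnitary : Matrix n n ℂ)).trace).re

/-- Operator norm (largest singular value). -/
noncomputable def opNorm {n : Type} [Fintype n] [DecidableEq n] (X : Matrix n n ℂ) : ℝ :=
  ‖Matrix.toEuclideanCLM (𝕜 := ℂ) X‖

/-- Logarithmic negativity `E_N(X) = log₂ ‖X^{T_B}‖₁`. -/
noncomputable def EN {IA IB : Type} [Fintype IA] [Fintype IB] [DecidableEq IA] [DecidableEq IB]
    (X : BMat IA IB) : ℝ :=
  Real.logb 2 (traceNorm (ptB X))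

/-- The extension `id_k ⊗ f` of a map on matrices, acting blockwise. -/
def extMap {I J : Type} (f : Matrix I I ℂ → Matrix J J ℂ) (k : ℕ)
    (M : Matrix (Fin k × I) (Fin k × I) ℂ) : Matrix (Fin k × J) (Fin k × J) ℂ :=
  fun p q => f (fun i i' => M (p.1, i) (q.1, i')) p.2 q.2

/-- A map on matrices is completely positive if all its extensions `id_k ⊗ f`
map positive semidefinite matrices to positive semidefinite matrices. -/
def CompletelyPositive {I J : Type} [Fintype I] [Fintype J]
    (f : Matrix I I ℂ → Matrix J J ℂ) : Prop :=
  ∀ (k : ℕ) (M : Matrix (Fin k × I) (Fin k × I) ℂ), M.PosSemidef → (extMap f k M).PosSemidef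

/-- A PPTq operation: a Hermitian-preserving, trace-preserving linear map `N`
such that `T_{B'} ∘ N ∘ T_B` is completely positive. -/
def IsPPTq {IA IB JA JB : Type} [Fintype IA] [Fintype IB] [Fintype JA] [Fintype JB]
    (N : BMat IA IB →ₗ[ℂ] BMat JA JB) : Prop :=
  (∀ X : BMat IA IB, X.IsHermitian → (N X).IsHermitian) ∧
  (∀ X : BMat IA IB, (N X).trace = X.trace) ∧
  CompletelyPositive (fun X => ptB (N (ptB X)))

/-- A bipartite quasi-state: Hermitian with trace one. -/
def IsQuasiState {IA IB : Type} [Fintype IA] [Fintype IB] (ρ : BMat IA IB) : Prop :=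
  ρ.IsHermitian ∧ ρ.trace = 1

/-- A bipartite quantum state: positive semidefinite with trace one. -/
def IsState {IA IB : Type} [Fintype IA] [Fintype IB] (ρ : BMat IA IB) : Prop :=
  ρ.PosSemidef ∧ ρ.trace = 1

/-- The maximally entangled state `Φ^d = (1/d) ∑_{i,j} |ii⟩⟨jj|`. -/
noncomputable def MES (d : ℕ) : BMat (Fin d) (Fin d) :=
  fun p q => if p.1 = p.2 ∧ q.1 = q.2 then (1 : ℂ) / d else 0

/-- `n`-fold tensor (Kronecker) power, with all `A` factors grouped against all `B` factors. -/
def tensorPow {IA IB : Type} (ρ : BMat IA IB) (n : ℕ) :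
    BMat (Fin n → IA) (Fin n → IB) :=
  fun p q => ∏ i : Fin n, ρ (p.1 i, p.2 i) (q.1 i, q.2 i)

/-- Tensor (Kronecker) product of two bipartite matrices, grouping `A` systems together
and `B` systems together. -/
def tensorMul {IA IB JA JB : Type} (ρ : BMat IA IB) (σ : BMat JA JB) :
    BMat (IA × JA) (IB × JB) :=
  fun p q => ρ (p.1.1, p.2.1) (q.1.1, q.2.1) * σ (p.1.2, p.2.2) (q.1.2, q.2.2)

/-- One-shot exact distillable entanglement under PPTq operations. -/
noncomputable def oneShotDistill {IA IB : Type} [Fintype IA] [Fintype IB]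
    (ρ : BMat IA IB) : ℝ :=
  sSup { x : ℝ | ∃ d : ℕ, 0 < d ∧ x = Real.logb 2 d ∧
    ∃ Λ : BMat IA IB →ₗ[ℂ] BMat (Fin d) (Fin d), IsPPTq Λ ∧ Λ ρ = MES d }

/-- One-shot exact entanglement cost under PPTq operations. -/
noncomputable def oneShotCost {IA IB : Type} [Fintype IA] [Fintype IB]
    (ρ : BMat IA IB) : ℝ :=
  sInf { x : ℝ | ∃ d : ℕ, 0 < d ∧ x = Real.logb 2 d ∧
    ∃ Λ : BMat (Fin d) (Fin d) →ₗ[ℂ] BMat IA IB, IsPPTq Λ ∧ Λ (MES d) = ρ }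

/-- The one-shot distillation error for `n` copies towards `Φ^d`, optimized over PPTq operations. -/
noncomputable def distillErr {IA IB : Type} [Fintype IA] [Fintype IB]
    [DecidableEq IA] [DecidableEq IB] (ρ : BMat IA IB) (n d : ℕ) : ℝ :=
  sInf { e : ℝ | ∃ Λ : BMat (Fin n → IA) (Fin n → IB) →ₗ[ℂ] BMat (Fin d) (Fin d),
    IsPPTq Λ ∧ e = traceNorm (Λ (tensorPow ρ n) - MES d) }

/-- The one-shot dilution error for preparing `n` copies from `Φ^d`, optimized over PPTq operations. -/
noncomputable def costErr {IA IB : Type} [Fintype IA] [Fintype IB]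
    [DecidableEq IA] [DecidableEq IB] (ρ : BMat IA IB) (n d : ℕ) : ℝ :=
  sInf { e : ℝ | ∃ Λ : BMat (Fin d) (Fin d) →ₗ[ℂ] BMat (Fin n → IA) (Fin n → IB),
    IsPPTq Λ ∧ e = traceNorm (tensorPow ρ n - Λ (MES d)) }

/-- Distillable entanglement under PPTq operations (asymptotically vanishing error). -/
noncomputable def EDppt {IA IB : Type} [Fintype IA] [Fintype IB]
    [DecidableEq IA] [DecidableEq IB] (ρ : BMat IA IB) : ℝ :=
  sSup { r : ℝ | Filter.Tendsto (fun n : ℕ => distillErr ρ n (2 ^ ⌊r * n⌋₊))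
    Filter.atTop (nhds 0) }

/-- Entanglement cost under PPTq operations (asymptotically vanishing error). -/
noncomputable def ECppt {IA IB : Type} [Fintype IA] [Fintype IB]
    [DecidableEq IA] [DecidableEq IB] (ρ : BMat IA IB) : ℝ :=
  sInf { r : ℝ | Filter.Tendsto (fun n : ℕ => costErr ρ n (2 ^ ⌈r * n⌉₊))
    Filter.atTop (nhds 0) }

/-- Tempered negativity `N_τ(σ | ρ)`. -/
noncomputable def temperedNeg {IA IB : Type} [Fintype IA] [Fintype IB]
    [DecidableEq IA] [DecidableEq IB] (σ ρ : BMat IA IB) : ℝ :=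
  sSup { t : ℝ | ∃ X : Matrix (IA × IB) (IA × IB) ℂ, X.IsHermitian ∧
    opNorm (ptB X) ≤ 1 ∧ (X * ρ).trace = (opNorm X : ℂ) ∧ (X * σ).trace = (t : ℂ) }

/-- Asymptotic exact conversion rate under PPTq operations. -/
noncomputable def convRate {IA IB JA JB : Type} [Fintype IA] [Fintype IB]
    [Fintype JA] [Fintype JB]
    (ρ : BMat IA IB) (σ : BMat JA JB) : ℝ :=
  sSup { r : ℝ | 0 ≤ r ∧ ∀ᶠ n : ℕ in Filter.atTop,
    ∃ Λ : BMat (Fin n → IA) (Fin n → IB) →ₗ[ℂ]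
          BMat (Fin ⌊r * n⌋₊ → JA) (Fin ⌊r * n⌋₊ → JB),
      IsPPTq Λ ∧ Λ (tensorPow ρ n) = tensorPow σ ⌊r * n⌋₊ }


/-! ### Auxiliary lemmas -/

section Aux

open scoped Matrix

lemma trace_conj_unitary' {n : Type} [Fintype n] [DecidableEq n] (U : Matrix.unitaryGroup n ℂ)
    (D : Matrix n n ℂ) : ((U : Matrix n n ℂ) * D * star (U : Matrix n n ℂ)).trace = D.trace := by
  rw [Matrix.trace_mul_cycle, Matrix.mem_unitaryGroup_iff'.mp U.2, Matrix.one_mul]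

lemma conj_unitary_mul' {n : Type} [Fintype n] [DecidableEq n] (U : Matrix.unitaryGroup n ℂ)
    (E F : Matrix n n ℂ) :
    ((U : Matrix n n ℂ) * E * star (U : Matrix n n ℂ)) *
      ((U : Matrix n n ℂ) * F * star (U : Matrix n n ℂ))
      = (U : Matrix n n ℂ) * (E * F) * star (U : Matrix n n ℂ) := by
  have hUU' : ∀ C : Matrix n n ℂ, star (U : Matrix n n ℂ) * ((U : Matrix n n ℂ) * C) = C := by
    intro C
    rw [← Matrix.mul_assoc, Matrix.mem_unitaryGroup_iff'.mp U.2, Matrix.one_mul]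
  simp only [Matrix.mul_assoc, hUU']

lemma sum_col_dot_eq_trace' {n : Type} [Fintype n] [DecidableEq n]
    (V : Matrix.unitaryGroup n ℂ) (M : Matrix n n ℂ) :
    ∑ i, dotProduct (star fun a => (V : Matrix n n ℂ) a i)
      (M.mulVec fun a => (V : Matrix n n ℂ) a i) = M.trace := by
  have h1 : ∀ i, dotProduct (star fun a => (V : Matrix n n ℂ) a i)
      (M.mulVec fun a => (V : Matrix n n ℂ) a i)
      = ((V : Matrix n n ℂ)ᴴ * M * (V : Matrix n n ℂ)) i i := by
    intro i
    simp only [Matrix.mul_apply, dotProduct, Matrix.mulVec, Matrix.conjTranspose_apply,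
      Pi.star_apply, dotProduct, Finset.sum_mul, Finset.mul_sum]
    rw [Finset.sum_comm]
    congr 1; ext a; congr 1; funext b; ring
  simp_rw [h1]
  have h2 : ((V : Matrix n n ℂ)ᴴ * M * (V : Matrix n n ℂ)).trace = M.trace := by
    rw [Matrix.trace_mul_cycle, ← Matrix.star_eq_conjTranspose,
      Matrix.mem_unitaryGroup_iff.mp V.2, Matrix.one_mul]
  simpa [Matrix.trace] using h2

lemma traceNorm_eq_sum_abs' {n : Type} [Fintype n] [DecidableEq n]
    (X : Matrix n n ℂ) (hX : X.IsHermitian) :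
    traceNorm X = ∑ i, |hX.eigenvalues i| := by
  set U := hX.eigenvectorUnitary with hUdef
  set D : Matrix n n ℂ := Matrix.diagonal (fun i => ((|hX.eigenvalues i| : ℝ) : ℂ)) with hD
  set B : Matrix n n ℂ := (U : Matrix n n ℂ) * D * star (U : Matrix n n ℂ) with hB
  have hDpsd : D.PosSemidef := by
    refine Matrix.posSemidef_diagonal_iff.mpr fun i => ?_
    simpa using Complex.zero_le_real.mpr (abs_nonneg _)
  have hBpsd : B.PosSemidef := by
    rw [hB, Matrix.star_eq_conjTranspose (U : Matrix n n ℂ)]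
    exact hDpsd.mul_mul_conjTranspose_same _
  have hB2 : B ^ 2 = Xᴴ * X := by
    rw [pow_two, hB, conj_unitary_mul']
    have hDD : D * D = Matrix.diagonal (RCLike.ofReal ∘ hX.eigenvalues)
        * Matrix.diagonal (RCLike.ofReal ∘ hX.eigenvalues) := by
      rw [hD, Matrix.diagonal_mul_diagonal, Matrix.diagonal_mul_diagonal]
      have hfun : (fun i => ((|hX.eigenvalues i| : ℝ) : ℂ) * ((|hX.eigenvalues i| : ℝ) : ℂ))
          = fun i => (RCLike.ofReal ∘ hX.eigenvalues) i * (RCLike.ofReal ∘ hX.eigenvalues) i := by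
        funext i
        show ((|hX.eigenvalues i| : ℝ) : ℂ) * ((|hX.eigenvalues i| : ℝ) : ℂ)
          = ((hX.eigenvalues i : ℝ) : ℂ) * ((hX.eigenvalues i : ℝ) : ℂ)
        norm_cast
        exact abs_mul_abs_self _
      rw [hfun]
    rw [hDD, hX.eq]
    conv_rhs => rw [hX.spectral_theorem, ← hUdef]; simp only [Unitary.conjStarAlgAut_apply, Unitary.coe_star]
    rw [conj_unitary_mul']
  have hsqrt : traceNorm X = B.trace.re := by
    open scoped MatrixOrder in
    have hXX := Matrix.posSemidef_conjTranspose_mul_self X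
    have e1 : CFC.sqrt (Xᴴ * X) = B :=
      CFC.sqrt_unique (by rw [← pow_two]; exact hB2) hBpsd.nonneg
    rw [traceNorm]
    congr 2
    refine Eq.trans ?_ e1
    symm
    refine CFC.sqrt_unique ?_ ?_
    · rw [conj_unitary_mul', Matrix.diagonal_mul_diagonal]
      conv_rhs => rw [hXX.1.spectral_theorem]; simp only [Unitary.conjStarAlgAut_apply, Unitary.coe_star]
      congr 2
      congr 1
      funext i
      simp only [Function.comp_apply]
      rw [← Complex.ofReal_mul, Real.mul_self_sqrt (hXX.eigenvalues_nonneg i)]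
      rfl
    · rw [Matrix.nonneg_iff_posSemidef, Matrix.star_eq_conjTranspose]
      refine Matrix.PosSemidef.mul_mul_conjTranspose_same ?_ _
      refine Matrix.posSemidef_diagonal_iff.mpr fun i => ?_
      simpa using Complex.zero_le_real.mpr (Real.sqrt_nonneg _)
  rw [hsqrt, hB, trace_conj_unitary', hD, Matrix.trace_diagonal]
  simp

lemma traceNorm_sub_le' {n : Type} [Fintype n] [DecidableEq n] {P Q : Matrix n n ℂ}
    (hP : P.PosSemidef) (hQ : Q.PosSemidef) :
    traceNorm (P - Q) ≤ P.trace.re + Q.trace.re := by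
  have hZ : (P - Q).IsHermitian := hP.1.sub hQ.1
  rw [traceNorm_eq_sum_abs' _ hZ]
  set V := hZ.eigenvectorUnitary with hVdef
  have key : ∀ i, |hZ.eigenvalues i| ≤
      (dotProduct (star fun a => (V : Matrix n n ℂ) a i)
        (P.mulVec fun a => (V : Matrix n n ℂ) a i)).re
      + (dotProduct (star fun a => (V : Matrix n n ℂ) a i)
        (Q.mulVec fun a => (V : Matrix n n ℂ) a i)).re := by
    intro i
    have hvcol : (fun a => (V : Matrix n n ℂ) a i) = ⇑(hZ.eigenvectorBasis i) := by
      funext a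
      exact hZ.eigenvectorUnitary_apply a i
    rw [hvcol]
    set v := ⇑(hZ.eigenvectorBasis i) with hv
    have hp : 0 ≤ (dotProduct (star v) (P.mulVec v)).re := by
      simpa using hP.re_dotProduct_nonneg v
    have hq : 0 ≤ (dotProduct (star v) (Q.mulVec v)).re := by
      simpa using hQ.re_dotProduct_nonneg v
    have heig : hZ.eigenvalues i = (dotProduct (star v) (P.mulVec v)).re
        - (dotProduct (star v) (Q.mulVec v)).re := by
      have he := hZ.eigenvalues_eq i
      rw [he, Matrix.sub_mulVec, dotProduct_sub]
      simp [Complex.sub_re]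
      rfl
    rw [heig]
    exact abs_le.mpr ⟨by linarith, by linarith⟩
  calc ∑ i, |hZ.eigenvalues i|
      ≤ ∑ i, ((dotProduct (star fun a => (V : Matrix n n ℂ) a i)
          (P.mulVec fun a => (V : Matrix n n ℂ) a i)).re
        + (dotProduct (star fun a => (V : Matrix n n ℂ) a i)
          (Q.mulVec fun a => (V : Matrix n n ℂ) a i)).re) :=
        Finset.sum_le_sum fun i _ => key i
    _ = P.trace.re + Q.trace.re := by
        rw [Finset.sum_add_distrib, ← Complex.re_sum, ← Complex.re_sum,
          sum_col_dot_eq_trace' V P, sum_col_dot_eq_trace' V Q]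

lemma exists_jordan' {n : Type} [Fintype n] [DecidableEq n]
    (Y : Matrix n n ℂ) (hY : Y.IsHermitian) :
    ∃ P Q : Matrix n n ℂ, P.PosSemidef ∧ Q.PosSemidef ∧ P - Q = Y ∧
      P.trace.re + Q.trace.re = traceNorm Y := by
  set U := hY.eigenvectorUnitary with hUdef
  set f : n → ℝ := fun i => max (hY.eigenvalues i) 0 with hf
  set g : n → ℝ := fun i => max (-(hY.eigenvalues i)) 0 with hg
  refine ⟨(U : Matrix n n ℂ) * Matrix.diagonal (fun i => ((f i : ℝ) : ℂ)) * star (U : Matrix n n ℂ),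
          (U : Matrix n n ℂ) * Matrix.diagonal (fun i => ((g i : ℝ) : ℂ)) * star (U : Matrix n n ℂ),
          ?_, ?_, ?_, ?_⟩
  · rw [Matrix.star_eq_conjTranspose (U : Matrix n n ℂ)]
    refine Matrix.PosSemidef.mul_mul_conjTranspose_same ?_ _
    refine Matrix.posSemidef_diagonal_iff.mpr fun i => ?_
    have hfi : (0 : ℝ) ≤ f i := le_max_right _ _
    simpa using hfi
  · rw [Matrix.star_eq_conjTranspose (U : Matrix n n ℂ)]
    refine Matrix.PosSemidef.mul_mul_conjTranspose_same ?_ _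
    refine Matrix.posSemidef_diagonal_iff.mpr fun i => ?_
    have hgi : (0 : ℝ) ≤ g i := le_max_right _ _
    simpa using hgi
  · have hdiag : Matrix.diagonal (fun i => ((f i : ℝ) : ℂ))
        - Matrix.diagonal (fun i => ((g i : ℝ) : ℂ))
        = Matrix.diagonal (RCLike.ofReal ∘ hY.eigenvalues) := by
      rw [Matrix.diagonal_sub]
      refine congrArg Matrix.diagonal (funext fun i => ?_)
      show ((f i : ℝ) : ℂ) - ((g i : ℝ) : ℂ) = ((hY.eigenvalues i : ℝ) : ℂ)
      rw [← Complex.ofReal_sub]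
      congr 1
      rw [hf, hg]
      rcases le_total 0 (hY.eigenvalues i) with h | h
      · simp [max_eq_left h, max_eq_right (neg_nonpos.mpr h)]
      · simp [max_eq_right h, max_eq_left (neg_nonneg.mpr h)]
    rw [← Matrix.sub_mul, ← Matrix.mul_sub, hdiag]
    exact hY.spectral_theorem.symm
  · rw [trace_conj_unitary', trace_conj_unitary', Matrix.trace_diagonal, Matrix.trace_diagonal,
      traceNorm_eq_sum_abs' Y hY, Complex.re_sum, Complex.re_sum]
    simp only [Complex.ofReal_re]
    rw [← Finset.sum_add_distrib]
    refine Finset.sum_congr rfl fun i _ => ?_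
    show max (hY.eigenvalues i) 0 + max (-hY.eigenvalues i) 0 = |hY.eigenvalues i|
    rcases le_total 0 (hY.eigenvalues i) with h | h
    · rw [max_eq_left h, max_eq_right (neg_nonpos.mpr h), add_zero, abs_of_nonneg h]
    · rw [max_eq_right h, max_eq_left (neg_nonneg.mpr h), zero_add, abs_of_nonpos h]

lemma abs_re_trace_le' {n : Type} [Fintype n] [DecidableEq n]
    (X : Matrix n n ℂ) (hX : X.IsHermitian) :
    |X.trace.re| ≤ traceNorm X := by
  have htr : X.trace.re = ∑ i, hX.eigenvalues i := by
    conv_lhs => rw [hX.spectral_theorem]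
    rw [Unitary.conjStarAlgAut_apply, trace_conj_unitary', Matrix.trace_diagonal, Complex.re_sum]
    simp
  rw [htr, traceNorm_eq_sum_abs' X hX]
  exact Finset.abs_sum_le_sum_abs _ _

lemma ptB_ptB' {IA IB : Type} (X : BMat IA IB) : ptB (ptB X) = X := rfl

lemma ptB_sub' {IA IB : Type} (A B : BMat IA IB) : ptB (A - B) = ptB A - ptB B := rfl

lemma trace_ptB' {IA IB : Type} [Fintype IA] [Fintype IB] (X : BMat IA IB) :
    (ptB X).trace = X.trace := rfl

lemma ptB_isHermitian' {IA IB : Type} {X : BMat IA IB} (hX : X.IsHermitian) :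
    (ptB X).IsHermitian := by
  have : ∀ p q, (ptB X)ᴴ p q = ptB X p q := by
    intro p q
    show star (X (q.1, p.2) (p.1, q.2)) = X (p.1, q.2) (q.1, p.2)
    calc star (X (q.1, p.2) (p.1, q.2)) = Xᴴ (p.1, q.2) (q.1, p.2) := rfl
      _ = X (p.1, q.2) (q.1, p.2) := by rw [hX.eq]
  exact Matrix.ext this

lemma CompletelyPositive.posSemidef' {I J : Type} [Fintype I] [Fintype J]
    {f : Matrix I I ℂ → Matrix J J ℂ} (hf : CompletelyPositive f)
    {X : Matrix I I ℂ} (hX : X.PosSemidef) : (f X).PosSemidef := by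
  have h1 : (X.submatrix (Prod.snd : Fin 1 × I → I) Prod.snd).PosSemidef := hX.submatrix _
  have h2 := hf 1 _ h1
  have h3 : extMap f 1 (X.submatrix Prod.snd Prod.snd)
      = (f X).submatrix (Prod.snd : Fin 1 × J → J) Prod.snd := rfl
  rw [h3] at h2
  have h4 : f X = ((f X).submatrix (Prod.snd : Fin 1 × J → J) Prod.snd).submatrix
      (fun j => ((0 : Fin 1), j)) (fun j => ((0 : Fin 1), j)) := rfl
  rw [h4]
  exact h2.submatrix _

end Aux

/-- A PPTq operation cannot increase the trace norm of the partial
transpose, hence cannot increase the logarithmic negativity. -/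
theorem PPTq_traceNorm_ptB_mono {dA dB dA' dB' : ℕ}
    (N : BMat (Fin dA) (Fin dB) →ₗ[ℂ] BMat (Fin dA') (Fin dB')) (hN : IsPPTq N)
    (ρ : BMat (Fin dA) (Fin dB)) (hρ : IsQuasiState ρ)
    (σ : BMat (Fin dA') (Fin dB')) (hσ : N ρ = σ) :
    traceNorm (ptB σ) ≤ traceNorm (ptB ρ) ∧ EN σ ≤ EN ρ := by
  obtain ⟨hρH, hρtr⟩ := hρ
  obtain ⟨hNH, hNtr, hNCP⟩ := hN
  have hY : (ptB ρ).IsHermitian := ptB_isHermitian' hρH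
  obtain ⟨P, Q, hP, hQ, hPQ, htr⟩ := exists_jordan' (ptB ρ) hY
  have hMP : (ptB (N (ptB P))).PosSemidef := hNCP.posSemidef' hP
  have hMQ : (ptB (N (ptB Q))).PosSemidef := hNCP.posSemidef' hQ
  have hps : ptB σ = ptB (N (ptB P)) - ptB (N (ptB Q)) := by
    have h0 : ptB σ = ptB (N (ptB (ptB ρ))) := by rw [ptB_ptB', hσ]
    rw [h0, ← hPQ, ptB_sub', map_sub, ptB_sub']
  have h1 : traceNorm (ptB σ) ≤ (ptB (N (ptB P))).trace.re + (ptB (N (ptB Q))).trace.re := by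
    rw [hps]
    exact traceNorm_sub_le' hMP hMQ
  have htrP : (ptB (N (ptB P))).trace = P.trace := by
    rw [trace_ptB', hNtr, trace_ptB']
  have htrQ : (ptB (N (ptB Q))).trace = Q.trace := by
    rw [trace_ptB', hNtr, trace_ptB']
  rw [htrP, htrQ, htr] at h1
  refine ⟨h1, ?_⟩
  have hσtr : σ.trace = 1 := by rw [← hσ, hNtr, hρtr]
  have hσH : σ.IsHermitian := hσ ▸ hNH ρ hρH
  have h2 : (1 : ℝ) ≤ traceNorm (ptB σ) := by
    have h3 := abs_re_trace_le' (ptB σ) (ptB_isHermitian' hσH)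
    rw [trace_ptB', hσtr] at h3
    simpa using h3
  exact Real.logb_le_logb_of_le one_lt_two (by linarith) h1


end
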